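/- Let G be an undirected edge-weighted graph with spanning tree T, and let e, e' be two distinct edges of T that are independent (neither lies in the subtree below the other). Then the weight of the cut of G determined by {e,e'} equals w(T_e) + w(T_{e'}) - 2·w(T_e, T_{e'}), where T_e denotes the vertex set of the subtree of T below e, w(T_e) is the total weight of edges of G with exactly one endpoint in T_e, and w(T_e, T_{e'}) is the total weight of edges of G with one endpoint in T_e and the other in T_{e'}. -/
import Mathlib


open Finset

/-- Total weight of graph edges with one endpoint in `A` and the other in `B`
(summed over ordered pairs). -/
def betw {V : Type*} [Fintype V] (w : V → V → ℝ) (A B : Finset V) : ℝ :=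
  ∑ u ∈ A, ∑ v ∈ B, w u v

/-- Weight of the cut `(S, V \\ S)`: total weight of edges leaving `S`. -/
def cutw {V : Type*} [Fintype V] [DecidableEq V] (w : V → V → ℝ) (S : Finset V) : ℝ :=
  betw w S Sᶜ

lemma betw_union_left {V : Type*} [Fintype V] [DecidableEq V] (w : V → V → ℝ) {A B : Finset V}
    (C : Finset V) (h : Disjoint A B) :
    betw w (A ∪ B) C = betw w A C + betw w B C := by
  simp [betw, Finset.sum_union h]

lemma betw_union_right {V : Type*} [Fintype V] [DecidableEq V] (w : V → V → ℝ) (A : Finset V)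
    {B C : Finset V} (h : Disjoint B C) :
    betw w A (B ∪ C) = betw w A B + betw w A C := by
  simp [betw, Finset.sum_union h, Finset.sum_add_distrib]

lemma betw_comm {V : Type*} [Fintype V] (w : V → V → ℝ)
    (hsym : ∀ u v, w u v = w v u) (A B : Finset V) :
    betw w A B = betw w B A := by
  rw [betw, Finset.sum_comm]
  simp only [betw]
  exact Finset.sum_congr rfl fun u _ => Finset.sum_congr rfl fun v _ => hsym v u

/-- If tree edges `e, e'` are independent, so that their subtrees `Te, Te'` are
disjoint, then the weight of the cut determined by {e,e'}, i.e. the cut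
`(Te ∪ Te', V \ (Te ∪ Te'))`, equals `w(Te) + w(Te') - 2 w(Te, Te')`. -/
theorem stmt_0 {V : Type*} [Fintype V] [DecidableEq V] (w : V → V → ℝ)
    (hsym : ∀ u v, w u v = w v u) (hnn : ∀ u v, 0 ≤ w u v)
    (Te Te' : Finset V) (hdisj : Disjoint Te Te') :
    cutw w (Te ∪ Te') = cutw w Te + cutw w Te' - 2 * betw w Te Te' := by
  have h1 : Teᶜ = (Te ∪ Te')ᶜ ∪ Te' := by
    rw [Finset.compl_union]
    ext x
    simp only [Finset.mem_compl, Finset.mem_union, Finset.mem_inter]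
    constructor
    · intro hx
      by_cases hx' : x ∈ Te'
      · exact Or.inr hx'
      · exact Or.inl ⟨hx, hx'⟩
    · rintro (⟨hx, _⟩ | hx)
      · exact hx
      · exact fun hxTe => (Finset.disjoint_left.mp hdisj hxTe) hx
  have h2 : Te'ᶜ = (Te ∪ Te')ᶜ ∪ Te := by
    rw [Finset.compl_union]
    ext x
    simp only [Finset.mem_compl, Finset.mem_union, Finset.mem_inter]
    constructor
    · intro hx
      by_cases hx' : x ∈ Te
      · exact Or.inr hx'
      · exact Or.inl ⟨hx', hx⟩
    · rintro (⟨_, hx⟩ | hx)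
      · exact hx
      · exact fun hxTe => (Finset.disjoint_right.mp hdisj hxTe) hx
  have d1 : Disjoint ((Te ∪ Te')ᶜ) Te' :=
    disjoint_compl_left.mono_right (Finset.subset_union_right)
  have d2 : Disjoint ((Te ∪ Te')ᶜ) Te :=
    disjoint_compl_left.mono_right (Finset.subset_union_left)
  have e1 : cutw w Te = betw w Te ((Te ∪ Te')ᶜ) + betw w Te Te' := by
    rw [cutw, h1, betw_union_right w _ d1]
  have e2 : cutw w Te' = betw w Te' ((Te ∪ Te')ᶜ) + betw w Te' Te := by
    rw [cutw, h2, betw_union_right w _ d2]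
  rw [cutw, betw_union_left w _ hdisj, e1, e2, betw_comm w hsym Te' Te]
  ring
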